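/- Let p ≥ 3 be prime, d, R ∈ ℚ nonzero with D = d² − R, f irreducible over ℚ with splitting field L not containing a primitive p-th root of unity, and suppose D is not the p-th power of a rational number. Let z ∈ ℚ̄ with z^p = D and u a root of f. Then Z^p − D is irreducible over ℚ(u), the field ℚ(z, u) has degree p² over ℚ, √R ∉ ℚ(z, u), and ℚ(z, u, √R) has degree 2p² over ℚ with ℚ-basis { z^j·u^k·(√R)^l : 0 ≤ j, k ≤ p−1, l ∈ {0,1} }. -/

import Mathlib

open Polynomial Finset IntermediateField

/-- The coefficient `c_{2k+1}` of the paper. -/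
def cOdd (p k : ℕ) : ℚ :=
  (-1) ^ ((p - 1) / 2 - k) * ((p : ℚ) / (((p + 1) / 2 + k : ℕ) : ℚ)) *
    (Nat.choose ((p + 1) / 2 + k) (2 * k + 1) : ℚ)

/-- The degree-`p` polynomial `f` of the paper, over `ℚ`. -/
noncomputable def fPoly (p : ℕ) (d R : ℚ) : ℚ[X] :=
  Polynomial.C ((d ^ 2 - R) ^ ((p - 1) / 2)) *
      ∑ k ∈ Finset.range ((p - 1) / 2 + 1),
        Polynomial.C (cOdd p k / (d ^ 2 - R) ^ k) * X ^ (2 * k + 1)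
    - Polynomial.C (2 * d * (d ^ 2 - R) ^ ((p - 1) / 2))

lemma cOdd_top {p m : ℕ} (hm : p = 2 * m + 1) (hp : 0 < p) : cOdd p m = 1 := by
  have h1 : (p - 1) / 2 = m := by omega
  have h2 : (p + 1) / 2 + m = p := by omega
  have h3 : 2 * m + 1 = p := hm.symm
  rw [cOdd, h1, h2, h3, Nat.sub_self, pow_zero, Nat.choose_self, Nat.cast_one, one_mul, mul_one,
    div_self]
  exact_mod_cast hp.ne'

lemma fPoly_coeff_p {p : ℕ} {d R : ℚ} (hD : d ^ 2 - R ≠ 0) {m : ℕ} (hm : p = 2 * m + 1) :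
    (fPoly p d R).coeff p = 1 := by
  have h1 : (p - 1) / 2 = m := by omega
  rw [fPoly, h1, coeff_sub, coeff_C_mul, finset_sum_coeff]
  have : ∀ k ∈ Finset.range (m + 1),
      (Polynomial.C (cOdd p k / (d ^ 2 - R) ^ k) * X ^ (2 * k + 1)).coeff p
      = if k = m then cOdd p m / (d ^ 2 - R) ^ m else 0 := by
    intro k hk
    rw [coeff_C_mul, coeff_X_pow]
    simp only [Finset.mem_range] at hk
    by_cases h : k = m
    · subst h; simp [hm]
    · have : ¬ (p = 2 * k + 1) := by omega
      simp [Ne.symm (by omega : 2*k+1 ≠ p), h]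
  rw [Finset.sum_congr rfl this, Finset.sum_ite_eq' (Finset.range (m+1)) m]
  simp only [Finset.mem_range, lt_add_iff_pos_right, Nat.lt_irrefl, if_pos (by omega : m < m + 1)]
  rw [cOdd_top hm (by omega), coeff_C, if_neg (by omega : ¬ p = 0)]
  field_simp
  rw [if_pos one_pos, sub_zero, mul_one_div_cancel (pow_ne_zero _ hD)]

lemma fPoly_natDegree_le {p : ℕ} {d R : ℚ} {m : ℕ} (hm : p = 2 * m + 1) :
    (fPoly p d R).natDegree ≤ p := by
  have h1 : (p - 1) / 2 = m := by omega
  rw [fPoly, h1]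
  refine le_trans (natDegree_sub_le _ _) ?_
  simp only [natDegree_C, max_le_iff]
  constructor
  · refine le_trans (natDegree_mul_le) ?_
    simp only [natDegree_C, zero_add]
    refine le_trans (natDegree_sum_le _ _) ?_
    refine (Finset.fold_max_le _).mpr ⟨by omega, fun k hk => ?_⟩
    simp only [Finset.mem_range] at hk
    refine le_trans (natDegree_mul_le) ?_
    simp only [natDegree_C, zero_add]
    refine le_trans (natDegree_X_pow_le _) (by omega)
  · omega

lemma fPoly_monic {p : ℕ} {d R : ℚ} (hD : d ^ 2 - R ≠ 0) {m : ℕ} (hm : p = 2 * m + 1) :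
    (fPoly p d R).Monic ∧ (fPoly p d R).natDegree = p := by
  have hc := fPoly_coeff_p hD hm
  have hdeg : (fPoly p d R).natDegree = p :=
    le_antisymm (fPoly_natDegree_le hm) (le_natDegree_of_ne_zero (by rw [hc]; norm_num))
  exact ⟨by rw [Monic, leadingCoeff, hdeg, hc], hdeg⟩

section
variable (p : ℕ) (d R : ℚ)

lemma no_pth_root_in_L (hp : p.Prime) (hD : d ^ 2 - R ≠ 0)
    (hDpow : ¬∃ q : ℚ, q ^ p = d ^ 2 - R)
    (hzeta : ∀ ζ : ℂ, IsPrimitiveRoot ζ p →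
      ζ ∉ IntermediateField.adjoin ℚ ((fPoly p d R).rootSet ℂ))
    (w : ℂ) (hw : w ∈ IntermediateField.adjoin ℚ ((fPoly p d R).rootSet ℂ))
    (hwp : w ^ p = ((d : ℂ) ^ 2 - (R : ℂ))) : False := by
  set L := IntermediateField.adjoin ℚ ((fPoly p d R).rootSet ℂ) with hL
  set g : ℚ[X] := X ^ p - Polynomial.C (d ^ 2 - R) with hg
  have hp0 : p ≠ 0 := hp.ne_zero
  push_neg at hDpow
  have hgirr : Irreducible g := X_pow_sub_C_irreducible_of_prime hp hDpow
  have hmonic : g.Monic := monic_X_pow_sub_C _ hp0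
  have hcast : (algebraMap ℚ ℂ) (d ^ 2 - R) = (d : ℂ) ^ 2 - (R : ℂ) := by
    rw [eq_ratCast]; push_cast; ring
  have hroot : aeval w g = 0 := by
    rw [hg]; simp [hwp, hcast]
  have hmin : minpoly ℚ w = g := (minpoly.eq_of_irreducible_of_monic hgirr hroot hmonic).symm
  haveI : IsSplittingField ℚ L (fPoly p d R) :=
    adjoin_rootSet_isSplittingField (IsAlgClosed.splits _)
  haveI : Normal ℚ L := Normal.of_isSplittingField (fPoly p d R)
  set w' : L := ⟨w, hw⟩ with hw'
  have hmapw : algebraMap L ℂ w' = w := rfl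
  have hminw' : minpoly ℚ w' = g := by
    rw [← hmin, ← hmapw, minpoly.algebraMap_eq (algebraMap L ℂ).injective]
  have hsplit : Splits (g.map (algebraMap ℚ L)) := by
    rw [← hminw']; exact Normal.splits inferInstance w'
  obtain ⟨ζ, hprim⟩ : ∃ ζ : ℂ, IsPrimitiveRoot ζ p :=
    ⟨Complex.exp (2 * Real.pi * Complex.I / p), Complex.isPrimitiveRoot_exp p hp0⟩
  have hDne : ((d : ℂ) ^ 2 - (R : ℂ)) ≠ 0 := by
    intro h
    apply hD
    have h2 : ((d ^ 2 - R : ℚ) : ℂ) = 0 := by push_cast; linear_combination h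
    exact_mod_cast h2
  have hwne : w ≠ 0 := by
    intro h; rw [h, zero_pow hp0] at hwp; exact hDne hwp.symm
  have hgne : g ≠ 0 := hmonic.ne_zero
  have hrootsmap : (g.map (algebraMap ℚ ℂ)).roots =
      ((g.map (algebraMap ℚ L)).roots).map (algebraMap L ℂ) := by
    have h1 : g.map (algebraMap ℚ ℂ) = (g.map (algebraMap ℚ L)).map (algebraMap L ℂ) := by
      rw [Polynomial.map_map, ← IsScalarTower.algebraMap_eq]
    rw [h1, hsplit.roots_map (algebraMap L ℂ)]
  have hmem : w * ζ ∈ (g.map (algebraMap ℚ ℂ)).roots := by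
    rw [mem_roots (by simpa using hgne)]
    rw [IsRoot, eval_map, ← aeval_def, hg]
    simp [mul_pow, hprim.pow_eq_one, hwp, hcast]
  rw [hrootsmap] at hmem
  obtain ⟨y, _, hy⟩ := Multiset.mem_map.mp hmem
  have hwz : w * ζ ∈ L := by rw [← hy]; exact y.2
  have hzeta_mem : ζ ∈ L := by
    have : ζ = w⁻¹ * (w * ζ) := by field_simp
    rw [this]
    exact mul_mem (inv_mem hw) hwz
  exact hzeta ζ hprim hzeta_mem

end

set_option maxHeartbeats 2000000 in
set_option synthInstance.maxHeartbeats 1000000 in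
theorem degrees_and_basis (p : ℕ) (hp : p.Prime) (hp3 : 3 ≤ p)
    (d R : ℚ) (hd : d ≠ 0) (hR : R ≠ 0) (hD : d ^ 2 - R ≠ 0)
    (hDpow : ¬∃ q : ℚ, q ^ p = d ^ 2 - R)
    (sqrtR : ℂ) (hsq : sqrtR ^ 2 = (R : ℂ))
    (hsR : sqrtR ∉ Set.range ((↑) : ℚ → ℂ))
    (hf : Irreducible (fPoly p d R))
    (hzeta : ∀ ζ : ℂ, IsPrimitiveRoot ζ p →
      ζ ∉ IntermediateField.adjoin ℚ ((fPoly p d R).rootSet ℂ))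
    (z u : ℂ) (hz : z ^ p = ((d : ℂ) ^ 2 - R)) (hu : aeval u (fPoly p d R) = 0) :
    Irreducible ((X ^ p - Polynomial.C (algebraMap ℚ ℚ⟮u⟯ (d ^ 2 - R))) :
        Polynomial ℚ⟮u⟯) ∧
    Module.finrank ℚ (IntermediateField.adjoin ℚ ({z, u} : Set ℂ)) = p ^ 2 ∧
    sqrtR ∉ IntermediateField.adjoin ℚ ({z, u} : Set ℂ) ∧
    Module.finrank ℚ (IntermediateField.adjoin ℚ ({z, u, sqrtR} : Set ℂ)) = 2 * p ^ 2 ∧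
    LinearIndependent ℚ
      (fun i : Fin p × Fin p × Fin 2 =>
        z ^ (i.1 : ℕ) * u ^ (i.2.1 : ℕ) * sqrtR ^ (i.2.2 : ℕ)) ∧
    Submodule.span ℚ
        (Set.range (fun i : Fin p × Fin p × Fin 2 =>
          z ^ (i.1 : ℕ) * u ^ (i.2.1 : ℕ) * sqrtR ^ (i.2.2 : ℕ))) =
      Subalgebra.toSubmodule
        (IntermediateField.adjoin ℚ ({z, u, sqrtR} : Set ℂ)).toSubalgebra := by
  obtain ⟨m, hm⟩ : ∃ m, p = 2 * m + 1 := by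
    obtain ⟨m', hm'⟩ := hp.odd_of_ne_two (by omega)
    exact ⟨m', by omega⟩
  obtain ⟨hfmonic, hfdeg⟩ := fPoly_monic hD hm
  have hfne : fPoly p d R ≠ 0 := hfmonic.ne_zero
  have huL : u ∈ IntermediateField.adjoin ℚ ((fPoly p d R).rootSet ℂ) :=
    subset_adjoin ℚ _ (by rw [mem_rootSet]; exact ⟨hfne, hu⟩)
  have hUL : ℚ⟮u⟯ ≤ IntermediateField.adjoin ℚ ((fPoly p d R).rootSet ℂ) :=
    adjoin_simple_le_iff.mpr huL
  have hD' : (algebraMap ℚ ℂ) (d ^ 2 - R) = (d : ℂ) ^ 2 - (R : ℂ) := by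
    rw [eq_ratCast]; push_cast; ring
  -- Conclusion 1
  have irr1 : Irreducible ((X ^ p - Polynomial.C (algebraMap ℚ ℚ⟮u⟯ (d ^ 2 - R))) :
      Polynomial ℚ⟮u⟯) := by
    apply X_pow_sub_C_irreducible_of_prime hp
    intro b hb
    apply no_pth_root_in_L p d R hp hD hDpow hzeta (algebraMap ℚ⟮u⟯ ℂ b) (hUL b.2)
    rw [← map_pow, hb, ← IsScalarTower.algebraMap_apply, hD']
  -- degree of E = ℚ(u)
  have hu_int : IsIntegral ℚ u := ⟨fPoly p d R, hfmonic, hu⟩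
  have hminu : minpoly ℚ u = fPoly p d R :=
    (minpoly.eq_of_irreducible_of_monic hf hu hfmonic).symm
  haveI : FiniteDimensional ℚ ℚ⟮u⟯ := adjoin.finiteDimensional hu_int
  have hEfin : Module.finrank ℚ ℚ⟮u⟯ = p := by
    rw [adjoin.finrank hu_int, hminu, hfdeg]
  -- z over E
  have hzE : aeval z ((X ^ p - Polynomial.C (algebraMap ℚ ℚ⟮u⟯ (d ^ 2 - R))) :
      Polynomial ℚ⟮u⟯) = 0 := by
    rw [map_sub, aeval_X_pow, aeval_C, ← IsScalarTower.algebraMap_apply, hD', hz, sub_self]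
  have hz_int : IsIntegral ℚ⟮u⟯ z := ⟨_, monic_X_pow_sub_C _ hp.ne_zero, hzE⟩
  have hminz : minpoly ℚ⟮u⟯ z = X ^ p - Polynomial.C (algebraMap ℚ ℚ⟮u⟯ (d ^ 2 - R)) :=
    (minpoly.eq_of_irreducible_of_monic irr1 hzE (monic_X_pow_sub_C _ hp.ne_zero)).symm
  haveI : FiniteDimensional ℚ⟮u⟯ ℚ⟮u⟯⟮z⟯ := adjoin.finiteDimensional hz_int
  have hFfin : Module.finrank ℚ⟮u⟯ ℚ⟮u⟯⟮z⟯ = p := by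
    rw [adjoin.finrank hz_int, hminz, natDegree_X_pow_sub_C]
  -- K2
  have hK2 : IntermediateField.adjoin ℚ ({z, u} : Set ℂ) =
      IntermediateField.restrictScalars ℚ (ℚ⟮u⟯⟮z⟯) := by
    refine Eq.trans ?_ (IntermediateField.adjoin_adjoin_left ℚ {u} {z}).symm
    rw [Set.singleton_union, Set.pair_comm]
  have hrfl : Module.finrank ℚ (IntermediateField.restrictScalars ℚ (ℚ⟮u⟯⟮z⟯)) =
      Module.finrank ℚ (ℚ⟮u⟯⟮z⟯) := rfl
  have hK2rank : Module.finrank ℚ (IntermediateField.adjoin ℚ ({z, u} : Set ℂ)) = p ^ 2 := by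
    rw [hK2, hrfl, ← Module.finrank_mul_finrank ℚ ℚ⟮u⟯ ℚ⟮u⟯⟮z⟯, hEfin, hFfin, sq]
  -- sqrtR not in K2
  have hsq' : ∀ w : ℂ, w ^ 2 = (R : ℂ) → w = sqrtR ∨ w = -sqrtR := by
    intro w hw
    exact (Commute.all w sqrtR).sq_eq_sq_iff_eq_or_eq_neg.mp (by rw [hw, hsq])
  have hnotin : sqrtR ∉ IntermediateField.adjoin ℚ ({z, u} : Set ℂ) := by
    intro hmem
    have hR2 : ∀ b : ℚ, b ^ 2 ≠ R := by
      intro b hb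
      have : ((b : ℂ)) ^ 2 = (R : ℂ) := by exact_mod_cast congrArg (fun q : ℚ => (q : ℂ)) hb
      rcases hsq' _ this with h | h
      · exact hsR ⟨b, h⟩
      · exact hsR ⟨-b, by push_cast; rw [h]; ring⟩
    have hirr2 : Irreducible ((X ^ 2 - Polynomial.C R) : ℚ[X]) :=
      X_pow_sub_C_irreducible_of_prime Nat.prime_two hR2
    have hroot2 : aeval sqrtR ((X ^ 2 - Polynomial.C R) : ℚ[X]) = 0 := by
      rw [map_sub, aeval_X_pow, aeval_C, hsq, eq_ratCast, sub_self]
    have hs_int : IsIntegral ℚ sqrtR :=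
      ⟨(X ^ 2 - Polynomial.C R : ℚ[X]), monic_X_pow_sub_C _ (by norm_num), hroot2⟩
    have hmins : minpoly ℚ sqrtR = X ^ 2 - Polynomial.C R :=
      (minpoly.eq_of_irreducible_of_monic hirr2 hroot2 (monic_X_pow_sub_C _ (by norm_num))).symm
    haveI : FiniteDimensional ℚ ℚ⟮sqrtR⟯ := adjoin.finiteDimensional hs_int
    have h2 : Module.finrank ℚ ℚ⟮sqrtR⟯ = 2 := by
      rw [adjoin.finrank hs_int, hmins, natDegree_X_pow_sub_C]
    have hle : ℚ⟮sqrtR⟯ ≤ IntermediateField.adjoin ℚ ({z, u} : Set ℂ) :=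
      adjoin_simple_le_iff.mpr hmem
    have hdvd : Module.finrank ℚ ℚ⟮sqrtR⟯ ∣
        Module.finrank ℚ (IntermediateField.adjoin ℚ ({z, u} : Set ℂ)) :=
      ⟨_, (IntermediateField.finrank_bot_mul_relfinrank hle).symm⟩
    rw [h2, hK2rank] at hdvd
    have hodd : Odd (p ^ 2) := (hp.odd_of_ne_two (by omega)).pow
    obtain ⟨k, hk⟩ := hodd
    obtain ⟨l, hl⟩ := hdvd
    omega
  -- the third floor: sqrtR over F := ℚ⟮u⟯⟮z⟯
  have hW2 : ∀ b : ℚ⟮u⟯⟮z⟯, b ^ 2 ≠ algebraMap ℚ ℚ⟮u⟯⟮z⟯ R := by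
    intro b hb
    apply hnotin
    have hbK2 : (algebraMap ℚ⟮u⟯⟮z⟯ ℂ b) ∈ IntermediateField.adjoin ℚ ({z, u} : Set ℂ) := by
      rw [hK2]; exact b.2
    have hcoe : (algebraMap ℚ⟮u⟯⟮z⟯ ℂ b) ^ 2 = (R : ℂ) := by
      rw [← map_pow, hb, ← IsScalarTower.algebraMap_apply, eq_ratCast]
    rcases hsq' _ hcoe with h | h
    · rw [← h]; exact hbK2
    · have h2 := neg_mem hbK2
      rw [h] at h2; simpa using h2
  have hirr3 : Irreducible ((X ^ 2 - Polynomial.C (algebraMap ℚ ℚ⟮u⟯⟮z⟯ R)) :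
      Polynomial ℚ⟮u⟯⟮z⟯) := X_pow_sub_C_irreducible_of_prime Nat.prime_two hW2
  have hroot3 : aeval sqrtR ((X ^ 2 - Polynomial.C (algebraMap ℚ ℚ⟮u⟯⟮z⟯ R)) :
      Polynomial ℚ⟮u⟯⟮z⟯) = 0 := by
    rw [map_sub, aeval_X_pow, aeval_C, ← IsScalarTower.algebraMap_apply, eq_ratCast, hsq,
      sub_self]
  have hs_int2 : IsIntegral ℚ⟮u⟯⟮z⟯ sqrtR :=
    ⟨(X ^ 2 - Polynomial.C (algebraMap ℚ ℚ⟮u⟯⟮z⟯ R)),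
      monic_X_pow_sub_C _ (by norm_num), hroot3⟩
  have hmin3 : minpoly ℚ⟮u⟯⟮z⟯ sqrtR = X ^ 2 - Polynomial.C (algebraMap ℚ ℚ⟮u⟯⟮z⟯ R) :=
    (minpoly.eq_of_irreducible_of_monic hirr3 hroot3 (monic_X_pow_sub_C _ (by norm_num))).symm
  haveI : FiniteDimensional ℚ⟮u⟯⟮z⟯ ℚ⟮u⟯⟮z⟯⟮sqrtR⟯ := adjoin.finiteDimensional hs_int2
  have hGfin : Module.finrank ℚ⟮u⟯⟮z⟯ ℚ⟮u⟯⟮z⟯⟮sqrtR⟯ = 2 := by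
    rw [adjoin.finrank hs_int2, hmin3, natDegree_X_pow_sub_C]
  -- identify K3
  have hK3 : IntermediateField.adjoin ℚ ({z, u, sqrtR} : Set ℂ) =
      IntermediateField.restrictScalars ℚ (ℚ⟮u⟯⟮z⟯⟮sqrtR⟯) := by
    have e1 : IntermediateField.restrictScalars ℚ (ℚ⟮u⟯⟮z⟯⟮sqrtR⟯) =
        IntermediateField.restrictScalars ℚ
          (IntermediateField.restrictScalars ℚ⟮u⟯ (ℚ⟮u⟯⟮z⟯⟮sqrtR⟯)) :=
      SetLike.coe_injective rfl
    rw [e1, IntermediateField.adjoin_adjoin_left, Set.singleton_union]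
    refine Eq.trans ?_ (IntermediateField.adjoin_adjoin_left ℚ {u} {z, sqrtR}).symm
    congr 1
    ext x
    simp only [Set.singleton_union, Set.mem_insert_iff, Set.mem_singleton_iff]
    tauto
  have hrfl3 : Module.finrank ℚ (IntermediateField.restrictScalars ℚ (ℚ⟮u⟯⟮z⟯⟮sqrtR⟯)) =
      Module.finrank ℚ (ℚ⟮u⟯⟮z⟯⟮sqrtR⟯) := rfl
  have hFrank : Module.finrank ℚ ℚ⟮u⟯⟮z⟯ = p ^ 2 := by
    rw [← hrfl, ← hK2, hK2rank]
  have hK3rank : Module.finrank ℚ (IntermediateField.adjoin ℚ ({z, u, sqrtR} : Set ℂ)) =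
      2 * p ^ 2 := by
    rw [hK3, hrfl3, ← Module.finrank_mul_finrank ℚ ℚ⟮u⟯⟮z⟯ ℚ⟮u⟯⟮z⟯⟮sqrtR⟯, hGfin, hFrank]
    ring
  -- bases
  let pbE := IntermediateField.adjoin.powerBasis hu_int
  let pbF := IntermediateField.adjoin.powerBasis hz_int
  let pbG := IntermediateField.adjoin.powerBasis hs_int2
  have hdimE : pbE.dim = p := by
    simp only [pbE, IntermediateField.adjoin.powerBasis_dim, hminu, hfdeg]
  have hdimF : pbF.dim = p := by
    simp only [pbF, IntermediateField.adjoin.powerBasis_dim, hminz, natDegree_X_pow_sub_C]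
  have hdimG : pbG.dim = 2 := by
    simp only [pbG, IntermediateField.adjoin.powerBasis_dim, hmin3, natDegree_X_pow_sub_C]
  let bE : Module.Basis (Fin p) ℚ ℚ⟮u⟯ := pbE.basis.reindex (finCongr hdimE)
  let bF : Module.Basis (Fin p) ℚ⟮u⟯ ℚ⟮u⟯⟮z⟯ := pbF.basis.reindex (finCongr hdimF)
  let bG : Module.Basis (Fin 2) ℚ⟮u⟯⟮z⟯ ℚ⟮u⟯⟮z⟯⟮sqrtR⟯ := pbG.basis.reindex (finCongr hdimG)
  have hbE : ∀ k : Fin p, (algebraMap ℚ⟮u⟯ ℂ) (bE k) = u ^ (k : ℕ) := by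
    intro k
    simp only [bE, Module.Basis.reindex_apply, PowerBasis.basis_eq_pow, map_pow]
    congr 1
  have hbF : ∀ j : Fin p, (algebraMap ℚ⟮u⟯⟮z⟯ ℂ) (bF j) = z ^ (j : ℕ) := by
    intro j
    simp only [bF, Module.Basis.reindex_apply, PowerBasis.basis_eq_pow, map_pow]
    congr 1
  have hbG : ∀ l : Fin 2, ((bG l : ℂ)) = sqrtR ^ (l : ℕ) := by
    intro l
    have h : (algebraMap ℚ⟮u⟯⟮z⟯⟮sqrtR⟯ ℂ) (bG l) = sqrtR ^ (l : ℕ) := by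
      simp only [bG, Module.Basis.reindex_apply, PowerBasis.basis_eq_pow, map_pow]
      congr 1
    exact h
  let B : Module.Basis (Fin p × Fin p × Fin 2) ℚ ℚ⟮u⟯⟮z⟯⟮sqrtR⟯ := bE.smulTower (bF.smulTower bG)
  let eIdx : (Fin p × Fin p × Fin 2) ≃ (Fin p × Fin p × Fin 2) :=
    ⟨fun i => (i.2.1, i.1, i.2.2), fun i => (i.2.1, i.1, i.2.2), fun i => rfl, fun i => rfl⟩
  let fG : ℚ⟮u⟯⟮z⟯⟮sqrtR⟯ →ₗ[ℚ] ℂ :=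
    { toFun := fun x => (x : ℂ)
      map_add' := fun a b => rfl
      map_smul' := fun q x => by
        simpa using (IntermediateField.coe_smul (S := ℚ⟮u⟯⟮z⟯⟮sqrtR⟯) q x) }
  have hfGinj : Function.Injective fG := fun a b h => Subtype.ext h
  have hval : ∀ i : Fin p × Fin p × Fin 2,
      fG (B (eIdx i)) = z ^ (i.1 : ℕ) * u ^ (i.2.1 : ℕ) * sqrtR ^ (i.2.2 : ℕ) := by
    rintro ⟨j, k, l⟩
    show ((B (k, j, l) : ℚ⟮u⟯⟮z⟯⟮sqrtR⟯) : ℂ) = _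
    rw [show B (k, j, l) = bE k • (bF j • bG l) by
      simp only [B, Module.Basis.smulTower_apply]]
    rw [IntermediateField.coe_smul, IntermediateField.coe_smul]
    rw [Algebra.smul_def, Algebra.smul_def, hbE, hbF, hbG]
    ring
  have hfun : (fun i : Fin p × Fin p × Fin 2 =>
      z ^ (i.1 : ℕ) * u ^ (i.2.1 : ℕ) * sqrtR ^ (i.2.2 : ℕ)) = fG ∘ B ∘ eIdx := by
    funext i
    rw [Function.comp_apply, Function.comp_apply, hval]
  have hli : LinearIndependent ℚ (fun i : Fin p × Fin p × Fin 2 =>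
      z ^ (i.1 : ℕ) * u ^ (i.2.1 : ℕ) * sqrtR ^ (i.2.2 : ℕ)) := by
    rw [hfun, ← Function.comp_assoc]
    exact ((B.linearIndependent.map' fG (LinearMap.ker_eq_bot.mpr hfGinj)).comp
      eIdx eIdx.injective)
  have hspan : Submodule.span ℚ
      (Set.range (fun i : Fin p × Fin p × Fin 2 =>
        z ^ (i.1 : ℕ) * u ^ (i.2.1 : ℕ) * sqrtR ^ (i.2.2 : ℕ))) =
      Subalgebra.toSubmodule
        (IntermediateField.adjoin ℚ ({z, u, sqrtR} : Set ℂ)).toSubalgebra := by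
    rw [hfun]
    have hrange : Set.range (⇑fG ∘ ⇑B ∘ ⇑eIdx) = ⇑fG '' Set.range ⇑B := by
      rw [← Function.comp_assoc, Equiv.surjective eIdx |>.range_comp, Set.range_comp]
    rw [hrange, ← Submodule.map_span, Module.Basis.span_eq, Submodule.map_top]
    ext x
    simp only [LinearMap.mem_range, Subalgebra.mem_toSubmodule,
      IntermediateField.mem_toSubalgebra]
    constructor
    · rintro ⟨g, rfl⟩
      rw [hK3]
      exact g.2
    · intro hx
      rw [hK3] at hx
      exact ⟨⟨x, hx⟩, rfl⟩
  exact ⟨irr1, hK2rank, hnotin, hK3rank, hli, hspan⟩
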